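/- Let g, h: ℝ^p → ℝ ∪ {∞} be proper, convex and lsc, and let Γ, Λ be diagonal positive definite p×p matrices with 0 ≺ Λ ≺ 2I. Then one iteration u = prox_h^Γ(s), v = prox_g^Γ(s), s⁺ = s + Λ(v − u) satisfies φ_Γ(s⁺) ≤ φ_Γ(s) − (1/2)‖u − v‖²_{(2I−Λ)Γ^{-1}Λ}, where φ_Γ := g^Γ − h^Γ and ‖x‖²_M = ⟨x, Mx⟩. -/

import Mathlib

open scoped InnerProductSpace
noncomputable section

/-- `ℝ^p` as a Euclidean space. -/
abbrev Euc (p : ℕ) := EuclideanSpace ℝ (Fin p)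

variable {p : ℕ}

/-- `f : ℝ^p → ℝ ∪ {∞}` (modelled with `EReal` values never equal to `-∞`) is proper. -/
def ProperFun (f : Euc p → EReal) : Prop :=
  (∀ x, f x ≠ ⊥) ∧ (∃ x, f x ≠ ⊤)

/-- Convexity for extended-real-valued functions. -/
def ConvexFun (f : Euc p → EReal) : Prop :=
  ∀ x y : Euc p, ∀ t : ℝ, 0 ≤ t → t ≤ 1 →
    f (t • x + (1 - t) • y) ≤ (t : EReal) * f x + ((1 - t : ℝ) : EReal) * f y

/-- A matrix acting on `ℝ^p`. -/
def mApply (M : Matrix (Fin p) (Fin p) ℝ) (x : Euc p) : Euc p :=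
  Matrix.toEuclideanLin M x

/-- The quadratic form `‖x‖²_M = ⟨x, Mx⟩`. -/
def qf (M : Matrix (Fin p) (Fin p) ℝ) (x : Euc p) : ℝ := ⟪x, mApply M x⟫_ℝ

/-- `u` minimizes `w ↦ f(w) + (1/2)‖w − x‖²_{Γ⁻¹}`. -/
def ProxObjMinM (f : Euc p → EReal) (Γ : Matrix (Fin p) (Fin p) ℝ) (x u : Euc p) : Prop :=
  ∀ w, f u + ((1/2 * qf Γ⁻¹ (u - x) : ℝ) : EReal) ≤ f w + ((1/2 * qf Γ⁻¹ (w - x) : ℝ) : EReal)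

/-- `u = prox_f^Γ(x)`: `u` is the unique minimizer of `w ↦ f(w) + (1/2)‖w − x‖²_{Γ⁻¹}`. -/
def IsProxOfM (f : Euc p → EReal) (Γ : Matrix (Fin p) (Fin p) ℝ) (x u : Euc p) : Prop :=
  ProxObjMinM f Γ x u ∧ ∀ w, ProxObjMinM f Γ x w → w = u

/-- The matrix-stepsize Moreau envelope `f^Γ(x) = inf_w { f(w) + (1/2)‖w − x‖²_{Γ⁻¹} }`. -/
def moreauM (f : Euc p → EReal) (Γ : Matrix (Fin p) (Fin p) ℝ) (x : Euc p) : EReal :=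
  ⨅ w : Euc p, f w + ((1/2 * qf Γ⁻¹ (w - x) : ℝ) : EReal)

/-- The real-valued matrix-stepsize Moreau envelope. -/
def moreauMR (f : Euc p → EReal) (Γ : Matrix (Fin p) (Fin p) ℝ) (x : Euc p) : ℝ :=
  (moreauM f Γ x).toReal

/-- The matrix-stepsize DC envelope `φ_Γ = g^Γ − h^Γ`. -/
def dceM (g h : Euc p → EReal) (Γ : Matrix (Fin p) (Fin p) ℝ) (s : Euc p) : ℝ :=
  moreauMR g Γ s - moreauMR h Γ s

/-! ### Auxiliary lemmas -/

lemma mApply_diagonal (d : Fin p → ℝ) (x : Euc p) (i : Fin p) :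
    mApply (Matrix.diagonal d) x i = d i * x i := by
  simp only [mApply, Matrix.toEuclideanLin, Matrix.toLin'_apply, WithLp.equiv,
    LinearEquiv.trans_apply, LinearEquiv.symm_apply_apply]
  exact Matrix.mulVec_diagonal d x i

lemma euc_inner_eq (x y : Euc p) : ⟪x, y⟫_ℝ = ∑ i, x i * y i := by
  simp [PiLp.inner_apply, RCLike.inner_apply, mul_comm]

lemma qf_diagonal (d : Fin p → ℝ) (x : Euc p) :
    qf (Matrix.diagonal d) x = ∑ i, d i * (x i) ^ 2 := by
  unfold qf
  rw [euc_inner_eq]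
  exact Finset.sum_congr rfl fun i _ => by rw [mApply_diagonal]; ring

/-- `f u` is finite at a prox point. -/
lemma prox_finite (f : Euc p → EReal) (hf : ProperFun f)
    (Γ : Matrix (Fin p) (Fin p) ℝ) (s u : Euc p) (hu : ProxObjMinM f Γ s u) :
    ∃ r : ℝ, f u = (r : EReal) := by
  obtain ⟨x, hx⟩ := hf.2
  have hfu_ne_top : f u ≠ ⊤ := by
    intro htop
    have h1 := hu x
    rw [htop, EReal.top_add_coe] at h1
    have h2 : f x + ((1/2 * qf Γ⁻¹ (x - s) : ℝ) : EReal) = ⊤ := top_le_iff.mp h1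
    have hx' : f x = ((f x).toReal : EReal) := (EReal.coe_toReal hx (hf.1 x)).symm
    rw [hx', ← EReal.coe_add] at h2
    exact EReal.coe_ne_top _ h2
  exact ⟨(f u).toReal, (EReal.coe_toReal hfu_ne_top (hf.1 u)).symm⟩

/-- Value of the Moreau envelope at a prox point. -/
lemma moreauM_eq (f : Euc p → EReal)
    (Γ : Matrix (Fin p) (Fin p) ℝ) (s u : Euc p) (hu : ProxObjMinM f Γ s u)
    (r : ℝ) (hr : f u = (r : EReal)) :
    moreauM f Γ s = ((r + 1/2 * qf Γ⁻¹ (u - s) : ℝ) : EReal) := by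
  apply le_antisymm
  · calc moreauM f Γ s ≤ f u + ((1/2 * qf Γ⁻¹ (u - s) : ℝ) : EReal) :=
          iInf_le (fun w => f w + ((1/2 * qf Γ⁻¹ (w - s) : ℝ) : EReal)) u
      _ = _ := by rw [hr, ← EReal.coe_add]
  · apply le_iInf
    intro w
    have := hu w
    rw [hr, ← EReal.coe_add] at this
    exact this

/-- The subgradient inequality at a prox point. -/
lemma prox_subgrad (f : Euc p → EReal) (hfb : ∀ x, f x ≠ ⊥) (hfc : ConvexFun f)
    (c : Fin p → ℝ) (hc : ∀ i, 0 ≤ c i)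
    (Γ : Matrix (Fin p) (Fin p) ℝ) (hΓinv : Γ⁻¹ = Matrix.diagonal c)
    (s u : Euc p) (hu : ProxObjMinM f Γ s u)
    (r : ℝ) (hr : f u = (r : EReal)) (w : Euc p) :
    ((r + ∑ i, c i * (w i - u i) * (s i - u i) : ℝ) : EReal) ≤ f w := by
  by_cases hw : f w = ⊤
  · rw [hw]; exact le_top
  have hwr : f w = (((f w).toReal : ℝ) : EReal) := (EReal.coe_toReal hw (hfb w)).symm
  set fw : ℝ := (f w).toReal with hfw
  set L : ℝ := ∑ i, c i * (w i - u i) * (s i - u i) with hL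
  set Qa : ℝ := ∑ i, c i * (w i - u i) ^ 2 with hQa
  have hQa0 : 0 ≤ Qa := Finset.sum_nonneg fun i _ => mul_nonneg (hc i) (sq_nonneg _)
  have key : ∀ t : ℝ, 0 < t → t ≤ 1 → r + L ≤ fw + t * (Qa / 2) := by
    intro t ht0 ht1
    have hconv := hfc w u t ht0.le ht1
    rw [hr, hwr, ← EReal.coe_mul, ← EReal.coe_mul, ← EReal.coe_add] at hconv
    have hprox := hu (t • w + (1 - t) • u)
    have hchain : ((r + 1/2 * qf Γ⁻¹ (u - s) : ℝ) : EReal) ≤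
        (((t * fw + (1 - t) * r) + 1/2 * qf Γ⁻¹ ((t • w + (1 - t) • u) - s) : ℝ) : EReal) := by
      rw [EReal.coe_add, EReal.coe_add]
      calc ((r : ℝ) : EReal) + ((1/2 * qf Γ⁻¹ (u - s) : ℝ) : EReal)
          = f u + ((1/2 * qf Γ⁻¹ (u - s) : ℝ) : EReal) := by rw [hr]
        _ ≤ f (t • w + (1 - t) • u) + ((1/2 * qf Γ⁻¹ ((t • w + (1 - t) • u) - s) : ℝ) : EReal) :=
            hprox
        _ ≤ _ := add_le_add_left hconv _
    rw [EReal.coe_le_coe_iff] at hchain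
    -- expand the quadratic term
    have hS : qf Γ⁻¹ ((t • w + (1 - t) • u) - s)
        = t ^ 2 * Qa - 2 * t * L + qf Γ⁻¹ (u - s) := by
      rw [hΓinv, qf_diagonal, qf_diagonal, hQa, hL, Finset.mul_sum, Finset.mul_sum,
        ← Finset.sum_sub_distrib, ← Finset.sum_add_distrib]
      refine Finset.sum_congr rfl fun i _ => ?_
      have hxi : ((t • w + (1 - t) • u) - s) i = t * w i + (1 - t) * u i - s i := rfl
      have hyi : (u - s) i = u i - s i := rfl
      have hzi : (w - u) i = w i - u i := rfl
      rw [hxi, hyi]; ring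
    rw [hS] at hchain
    have h2 : t * (r + L) ≤ t * (fw + t * (Qa / 2)) := by nlinarith [hchain]
    exact (mul_le_mul_iff_right₀ ht0).mp h2
  refine EReal.coe_le_coe_iff.mpr ?_ |>.trans_eq hwr.symm
  refine le_of_forall_pos_le_add fun ε hε => ?_
  rcases eq_or_lt_of_le hQa0 with hQ | hQ
  · have := key 1 one_pos le_rfl
    rw [← hQ] at this
    linarith
  · have htpos : 0 < min 1 (2 * ε / Qa) := lt_min one_pos (by positivity)
    have := key (min 1 (2 * ε / Qa)) htpos (min_le_left _ _)
    have h3 : min 1 (2 * ε / Qa) * (Qa / 2) ≤ ε := by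
      have h4 : min 1 (2 * ε / Qa) ≤ 2 * ε / Qa := min_le_right _ _
      calc min 1 (2 * ε / Qa) * (Qa / 2) ≤ (2 * ε / Qa) * (Qa / 2) :=
            mul_le_mul_of_nonneg_right h4 (by linarith)
        _ = ε := by field_simp
    linarith

/-- Lower bound for the Moreau envelope at a shifted point. -/
lemma moreauM_lb (f : Euc p → EReal) (hfb : ∀ x, f x ≠ ⊥) (hfc : ConvexFun f)
    (c : Fin p → ℝ) (hc : ∀ i, 0 ≤ c i)
    (Γ : Matrix (Fin p) (Fin p) ℝ) (hΓinv : Γ⁻¹ = Matrix.diagonal c)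
    (s u z : Euc p) (hu : ProxObjMinM f Γ s u)
    (r : ℝ) (hr : f u = (r : EReal)) :
    ((r + 1/2 * (∑ i, c i * (u i - s i) ^ 2)
        - ∑ i, c i * (u i - s i) * (z i - s i) : ℝ) : EReal) ≤ moreauM f Γ z := by
  apply le_iInf
  intro w
  have hsub := prox_subgrad f hfb hfc c hc Γ hΓinv s u hu r hr w
  have hq : ((r + ∑ i, c i * (w i - u i) * (s i - u i) : ℝ) : EReal)
      + ((1/2 * qf Γ⁻¹ (w - z) : ℝ) : EReal)
      ≤ f w + ((1/2 * qf Γ⁻¹ (w - z) : ℝ) : EReal) := add_le_add_left hsub _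
  refine le_trans ?_ hq
  rw [← EReal.coe_add, EReal.coe_le_coe_iff]
  rw [hΓinv, qf_diagonal]
  have hexp : ∀ i : Fin p, (w - z) i = w i - z i := fun i => rfl
  have hkey : 1/2 * (∑ i, c i * (u i - s i) ^ 2) - ∑ i, c i * (u i - s i) * (z i - s i)
      ≤ (∑ i, c i * (w i - u i) * (s i - u i)) + 1/2 * ∑ i, c i * (w i - z i) ^ 2 := by
    rw [Finset.mul_sum, Finset.mul_sum, ← Finset.sum_sub_distrib, ← Finset.sum_add_distrib]
    refine Finset.sum_le_sum fun i _ => ?_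
    nlinarith [hc i, sq_nonneg ((w i - u i) - (z i - s i)), mul_nonneg (hc i)
      (sq_nonneg ((w i - u i) - (z i - s i)))]
  have hrw : ∑ i, c i * ((w - z) i) ^ 2 = ∑ i, c i * (w i - z i) ^ 2 :=
    Finset.sum_congr rfl fun i _ => by rw [hexp i]
  rw [hrw]
  linarith

/-- with diagonal positive definite `Γ` and diagonal `0 ≺ Λ ≺ 2I`, one iteration
`u = prox_h^Γ(s)`, `v = prox_g^Γ(s)`, `s⁺ = s + Λ(v − u)` satisfies
`φ_Γ(s⁺) ≤ φ_Γ(s) − (1/2)‖u − v‖²_{(2I−Λ)Γ⁻¹Λ}`. -/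
theorem statement17
    (g h : Euc p → EReal)
    (hg_proper : ProperFun g) (hg_convex : ConvexFun g) (hg_lsc : LowerSemicontinuous g)
    (hh_proper : ProperFun h) (hh_convex : ConvexFun h) (hh_lsc : LowerSemicontinuous h)
    (Γ Λ : Matrix (Fin p) (Fin p) ℝ)
    (hΓdiag : Γ.IsDiag) (hΓpos : Γ.PosDef)
    (hΛdiag : Λ.IsDiag) (hΛpos : Λ.PosDef)
    (hΛlt2 : (2 • (1 : Matrix (Fin p) (Fin p) ℝ) - Λ).PosDef)
    (s u v splus : Euc p)
    (hu : IsProxOfM h Γ s u) (hv : IsProxOfM g Γ s v)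
    (hsplus : splus = s + mApply Λ (v - u)) :
    dceM g h Γ splus ≤
      dceM g h Γ s -
        1/2 * qf ((2 • (1 : Matrix (Fin p) (Fin p) ℝ) - Λ) * Γ⁻¹ * Λ) (u - v) := by
  -- diagonal data
  set γ : Fin p → ℝ := Γ.diag with hγdef
  have hΓeq : Γ = Matrix.diagonal γ := (hΓdiag.diagonal_diag).symm
  have hγpos : ∀ i, 0 < γ i := by
    rw [hΓeq] at hΓpos
    exact Matrix.posDef_diagonal_iff.mp hΓpos
  set c : Fin p → ℝ := fun i => (γ i)⁻¹ with hcdef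
  have hc : ∀ i, 0 ≤ c i := fun i => (inv_pos.mpr (hγpos i)).le
  have hΓinv : Γ⁻¹ = Matrix.diagonal c := by
    rw [hΓeq]
    refine Matrix.inv_eq_left_inv ?_
    rw [Matrix.diagonal_mul_diagonal]
    have : (fun i => c i * γ i) = fun _ => (1 : ℝ) := by
      funext i; exact inv_mul_cancel₀ (hγpos i).ne'
    rw [this, Matrix.diagonal_one]
  set lam : Fin p → ℝ := Λ.diag with hlamdef
  have hΛeq : Λ = Matrix.diagonal lam := (hΛdiag.diagonal_diag).symm
  -- splus coordinates
  have hsp : ∀ i, splus i = s i + lam i * (v i - u i) := by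
    intro i
    rw [hsplus]
    have h1 : (s + mApply Λ (v - u)) i = s i + mApply Λ (v - u) i := rfl
    rw [h1, hΛeq, mApply_diagonal]
    rfl
  -- the target matrix is diagonal
  have hT : (2 • (1 : Matrix (Fin p) (Fin p) ℝ) - Λ) * Γ⁻¹ * Λ
      = Matrix.diagonal (fun i => (2 - lam i) * c i * lam i) := by
    have h21 : (2 • (1 : Matrix (Fin p) (Fin p) ℝ)) - Λ
        = Matrix.diagonal (fun i => 2 - lam i) := by
      rw [hΛeq, ← Matrix.diagonal_one]
      ext i j
      by_cases hij : i = j <;>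
        simp [Matrix.diagonal, hij, Matrix.sub_apply, Matrix.smul_apply]
    rw [h21, hΓinv, hΛeq, Matrix.diagonal_mul_diagonal, Matrix.diagonal_mul_diagonal]
  have hqfT : qf ((2 • (1 : Matrix (Fin p) (Fin p) ℝ) - Λ) * Γ⁻¹ * Λ) (u - v)
      = ∑ i, (2 - lam i) * c i * lam i * (u i - v i) ^ 2 := by
    rw [hT, qf_diagonal]
    exact Finset.sum_congr rfl fun i _ => rfl
  -- prox data for h at s (point u)
  obtain ⟨ru, hru⟩ := prox_finite h hh_proper Γ s u hu.1
  obtain ⟨rv, hrv⟩ := prox_finite g hg_proper Γ s v hv.1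
  -- envelope values at s
  have hMh : moreauM h Γ s = ((ru + 1/2 * qf Γ⁻¹ (u - s) : ℝ) : EReal) :=
    moreauM_eq h Γ s u hu.1 ru hru
  have hMg : moreauM g Γ s = ((rv + 1/2 * qf Γ⁻¹ (v - s) : ℝ) : EReal) :=
    moreauM_eq g Γ s v hv.1 rv hrv
  have hMhR : moreauMR h Γ s = ru + 1/2 * qf Γ⁻¹ (u - s) := by
    rw [moreauMR, hMh, EReal.toReal_coe]
  have hMgR : moreauMR g Γ s = rv + 1/2 * qf Γ⁻¹ (v - s) := by
    rw [moreauMR, hMg, EReal.toReal_coe]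
  -- bounds at splus
  have hlb_h := moreauM_lb h hh_proper.1 hh_convex c hc Γ hΓinv s u splus hu.1 ru hru
  have hlb_g := moreauM_lb g hg_proper.1 hg_convex c hc Γ hΓinv s v splus hv.1 rv hrv
  have hub_h : moreauM h Γ splus ≤ ((ru + 1/2 * qf Γ⁻¹ (u - splus) : ℝ) : EReal) := by
    calc moreauM h Γ splus ≤ h u + ((1/2 * qf Γ⁻¹ (u - splus) : ℝ) : EReal) :=
          iInf_le (fun w => h w + ((1/2 * qf Γ⁻¹ (w - splus) : ℝ) : EReal)) u
      _ = _ := by rw [hru, ← EReal.coe_add]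
  have hub_g : moreauM g Γ splus ≤ ((rv + 1/2 * qf Γ⁻¹ (v - splus) : ℝ) : EReal) := by
    calc moreauM g Γ splus ≤ g v + ((1/2 * qf Γ⁻¹ (v - splus) : ℝ) : EReal) :=
          iInf_le (fun w => g w + ((1/2 * qf Γ⁻¹ (w - splus) : ℝ) : EReal)) v
      _ = _ := by rw [hrv, ← EReal.coe_add]
  -- real bounds via toReal
  have hne_top_h : moreauM h Γ splus ≠ ⊤ := (hub_h.trans_lt (EReal.coe_lt_top _)).ne
  have hne_bot_h : moreauM h Γ splus ≠ ⊥ := by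
    intro hb; rw [hb] at hlb_h; exact (EReal.coe_ne_bot _) (le_bot_iff.mp hlb_h)
  have hne_top_g : moreauM g Γ splus ≠ ⊤ := (hub_g.trans_lt (EReal.coe_lt_top _)).ne
  have hne_bot_g : moreauM g Γ splus ≠ ⊥ := by
    intro hb; rw [hb] at hlb_g; exact (EReal.coe_ne_bot _) (le_bot_iff.mp hlb_g)
  have hRh : ru + 1/2 * (∑ i, c i * (u i - s i) ^ 2)
      - (∑ i, c i * (u i - s i) * (splus i - s i)) ≤ moreauMR h Γ splus := by
    have := EReal.toReal_le_toReal hlb_h (EReal.coe_ne_bot _) hne_top_h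
    rwa [EReal.toReal_coe] at this
  have hRg : moreauMR g Γ splus ≤ rv + 1/2 * qf Γ⁻¹ (v - splus) := by
    have := EReal.toReal_le_toReal hub_g hne_bot_g (EReal.coe_ne_top _)
    rwa [EReal.toReal_coe] at this
  -- rewrite quadratic forms as sums
  have hqf_us : qf Γ⁻¹ (u - s) = ∑ i, c i * (u i - s i) ^ 2 := by
    rw [hΓinv, qf_diagonal]; exact Finset.sum_congr rfl fun i _ => rfl
  have hqf_vs : qf Γ⁻¹ (v - s) = ∑ i, c i * (v i - s i) ^ 2 := by
    rw [hΓinv, qf_diagonal]; exact Finset.sum_congr rfl fun i _ => rfl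
  have hqf_vsp : qf Γ⁻¹ (v - splus) = ∑ i, c i * (v i - splus i) ^ 2 := by
    rw [hΓinv, qf_diagonal]; exact Finset.sum_congr rfl fun i _ => rfl
  -- the master algebraic identity
  have hmaster : ∑ i, (1/2 * (c i * (v i - splus i) ^ 2)
        + c i * (u i - s i) * (splus i - s i))
      = ∑ i, (1/2 * (c i * (v i - s i) ^ 2)
        - 1/2 * ((2 - lam i) * c i * lam i * (u i - v i) ^ 2)) := by
    refine Finset.sum_congr rfl fun i _ => ?_
    rw [hsp i]; ring
  rw [Finset.sum_add_distrib, Finset.sum_sub_distrib, ← Finset.mul_sum, ← Finset.mul_sum,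
    ← Finset.mul_sum] at hmaster
  -- conclude
  unfold dceM
  rw [hMgR, hMhR, hqfT, hqf_us, hqf_vs]
  have hRg' : moreauMR g Γ splus ≤ rv + 1/2 * ∑ i, c i * (v i - splus i) ^ 2 := by
    rwa [hqf_vsp] at hRg
  linarith [hRg', hRh, hmaster]
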